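/- arXiv:2407.00971 — 3 statements merged into one kernel-verified Lean document; each statement's English description precedes it below -/
import Mathlib

section
/- Let ν be a Young diagram, let x = (c,r) be a removable corner of ν (i.e. x ∈ ν and μ := ν \ {x} is again a Young diagram), let R be the set of cells (a,r) ∈ ν with a < c (the cells of ν in the same row as x) and C the set of cells (c,b) ∈ ν with b < r (the cells of ν in the same column as x). Then in ℚ(q,t) one has (1−qt) · ∏_{y∈R} (1−q^{1+a_ν(y)} t^{−l_ν(y)})/(1−q^{1+a_μ(y)} t^{−l_μ(y)}) · ∏_{y∈C} (1−q^{−a_ν(y)} t^{l_ν(y)+1})/(1−q^{−a_μ(y)} t^{l_μ(y)+1}) = Ω⁰( q^{c+1} t^{r+1} − (1−q)(1−t)·Σ_{(a,b)∈μ} q^{c−a} t^{r−b} ). -/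
open scoped Classical

noncomputable section

/-- The field `ℚ(q,t)` of rational functions in two variables over `ℚ`. -/
abbrev K : Type := FractionRing (MvPolynomial (Fin 2) ℚ)

def q : K := algebraMap (MvPolynomial (Fin 2) ℚ) K (MvPolynomial.X 0)
def t : K := algebraMap (MvPolynomial (Fin 2) ℚ) K (MvPolynomial.X 1)

/-- The Laurent monomial `q^i t^j` with integer exponents. -/
def monK (i j : ℤ) : K := q ^ i * t ^ j

/-- `Ω⁰` of a Laurent polynomial, given by its (finitely supported) coefficient
function `P : ℤ × ℤ →₀ ℤ`: the product `∏_{(i,j) ≠ (0,0)} (1 - q^i t^j)^{c_{ij}}`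
(the constant coefficient is ignored). -/
def Omega0 (P : (ℤ × ℤ) →₀ ℤ) : K :=
  ∏ p ∈ P.support.erase (0, 0), (1 - monK p.1 p.2) ^ P p

/-- The coefficient function of the Laurent monomial `q^i t^j`. -/
def lmono (i j : ℤ) : (ℤ × ℤ) →₀ ℤ := Finsupp.single (i, j) 1

/-- The coefficient function of the Laurent polynomial `(1-q)(1-t) · q^u t^v`. -/
def quadr (u v : ℤ) : (ℤ × ℤ) →₀ ℤ :=
  lmono u v - lmono (u + 1) v - lmono u (v + 1) + lmono (u + 1) (v + 1)

/-- A Young diagram: a finite set of cells in `ℕ × ℕ` closed under decreasing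
either coordinate. -/
def IsYoung (μ : Finset (ℕ × ℕ)) : Prop :=
  ∀ a b a' b', (a, b) ∈ μ → a' ≤ a → b' ≤ b → (a', b') ∈ μ

/-- The arm of the cell `x` in `μ`: cells of `μ` in the same row strictly to the right. -/
def arm (μ : Finset (ℕ × ℕ)) (x : ℕ × ℕ) : ℕ :=
  (μ.filter fun y => y.2 = x.2 ∧ x.1 < y.1).card

/-- The leg of the cell `x` in `μ`: cells of `μ` in the same column strictly above. -/
def leg (μ : Finset (ℕ × ℕ)) (x : ℕ × ℕ) : ℕ :=
  (μ.filter fun y => y.1 = x.1 ∧ x.2 < y.2).card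

/-- `g_μ = ∏_{x∈μ} (1 - q^{a(x)+1} t^{-l(x)}) (1 - q^{-a(x)} t^{l(x)+1})`. -/
def gPoly (μ : Finset (ℕ × ℕ)) : K :=
  ∏ x ∈ μ,
    ((1 - monK ((arm μ x : ℤ) + 1) (-(leg μ x : ℤ))) *
      (1 - monK (-(arm μ x : ℤ)) ((leg μ x : ℤ) + 1)))


-- ## Auxiliary lemmas
section helpers

lemma algK_inj : Function.Injective (algebraMap (MvPolynomial (Fin 2) ℚ) K) :=
  IsFractionRing.injective _ _

lemma q_ne_zero : q ≠ 0 := by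
  intro h
  have := algK_inj (h.trans (map_zero _).symm)
  exact MvPolynomial.X_ne_zero 0 this

lemma t_ne_zero : t ≠ 0 := by
  intro h
  have := algK_inj (h.trans (map_zero _).symm)
  exact MvPolynomial.X_ne_zero 1 this

lemma qt_nat_inj {a b a' b' : ℕ} (h : q ^ a * t ^ b = q ^ a' * t ^ b') :
    a = a' ∧ b = b' := by
  have h2 : (algebraMap (MvPolynomial (Fin 2) ℚ) K)
      ((MvPolynomial.X 0) ^ a * (MvPolynomial.X 1) ^ b) =
      (algebraMap (MvPolynomial (Fin 2) ℚ) K)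
      ((MvPolynomial.X 0) ^ a' * (MvPolynomial.X 1) ^ b') := by
    simpa [map_mul, map_pow, q, t] using h
  have h3 := algK_inj h2
  simp only [MvPolynomial.X_pow_eq_monomial, MvPolynomial.monomial_mul, one_mul,
    MvPolynomial.monomial_eq_monomial_iff] at h3
  rcases h3 with h3 | h3
  · have h0 := DFunLike.congr_fun h3.1 0
    have h1 := DFunLike.congr_fun h3.1 1
    simp [Finsupp.single_apply, Finsupp.add_apply] at h0 h1
    exact ⟨h0, h1⟩
  · exact absurd h3.1 one_ne_zero

lemma monK_eq_one {i j : ℤ} (h : monK i j = 1) : i = 0 ∧ j = 0 := by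
  have h' : q ^ i * t ^ j = 1 := h
  have key : q ^ i.toNat * t ^ j.toNat = q ^ (-i).toNat * t ^ (-j).toNat := by
    have e1 : (i.toNat : ℤ) = i + (-i).toNat := by omega
    have e2 : (j.toNat : ℤ) = j + (-j).toNat := by omega
    have key0 : q ^ (i.toNat : ℤ) * t ^ (j.toNat : ℤ) =
        q ^ ((-i).toNat : ℤ) * t ^ ((-j).toNat : ℤ) := by
      rw [e1, e2, zpow_add₀ q_ne_zero, zpow_add₀ t_ne_zero]
      calc q ^ i * q ^ ((-i).toNat : ℤ) * (t ^ j * t ^ ((-j).toNat : ℤ))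
          = (q ^ i * t ^ j) * (q ^ ((-i).toNat : ℤ) * t ^ ((-j).toNat : ℤ)) := by ring
        _ = q ^ ((-i).toNat : ℤ) * t ^ ((-j).toNat : ℤ) := by rw [h']; ring
    rw [← zpow_natCast q, ← zpow_natCast t, ← zpow_natCast q, ← zpow_natCast t]
    exact key0
  have := qt_nat_inj key
  omega

lemma one_sub_monK_ne_zero {p : ℤ × ℤ} (hp : p ≠ (0, 0)) : (1 : K) - monK p.1 p.2 ≠ 0 := by
  intro h
  have : monK p.1 p.2 = 1 := by linear_combination -h
  have := monK_eq_one this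
  exact hp (by ext <;> simp [this.1, this.2])

lemma Omega0_eq_prod (P : (ℤ × ℤ) →₀ ℤ) (S : Finset (ℤ × ℤ))
    (hS : P.support.erase (0,0) ⊆ S) (h0 : (0,0) ∉ S) :
    Omega0 P = ∏ p ∈ S, (1 - monK p.1 p.2) ^ P p := by
  refine Finset.prod_subset hS fun p hp hp' => ?_
  have : P p = 0 := by
    by_contra h
    exact hp' (Finset.mem_erase.mpr ⟨fun h' => h0 (h' ▸ hp), Finsupp.mem_support_iff.mpr h⟩)
  simp [this]

lemma Omega0_zero : Omega0 0 = 1 := by simp [Omega0]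

lemma Omega0_add (P Q : (ℤ × ℤ) →₀ ℤ) : Omega0 (P + Q) = Omega0 P * Omega0 Q := by
  set S := (P.support ∪ Q.support ∪ (P + Q).support).erase (0,0) with hSdef
  have h0 : (0,0) ∉ S := Finset.notMem_erase _ _
  have hP : P.support.erase (0,0) ⊆ S := Finset.erase_subset_erase _ (by
    intro x hx; simp [Finset.mem_union, hx])
  have hQ : Q.support.erase (0,0) ⊆ S := Finset.erase_subset_erase _ (by
    intro x hx; simp [Finset.mem_union, hx])
  have hPQ : (P + Q).support.erase (0,0) ⊆ S := Finset.erase_subset_erase _ (by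
    intro x hx; simp [Finset.mem_union, hx])
  rw [Omega0_eq_prod P S hP h0, Omega0_eq_prod Q S hQ h0, Omega0_eq_prod (P+Q) S hPQ h0,
    ← Finset.prod_mul_distrib]
  refine Finset.prod_congr rfl fun p hp => ?_
  have hne : (1 : K) - monK p.1 p.2 ≠ 0 :=
    one_sub_monK_ne_zero (Finset.ne_of_mem_erase hp)
  rw [Finsupp.add_apply, zpow_add₀ hne]

lemma Omega0_ne_zero (P : (ℤ × ℤ) →₀ ℤ) : Omega0 P ≠ 0 := by
  refine Finset.prod_ne_zero_iff.mpr fun p hp => ?_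
  exact zpow_ne_zero _ (one_sub_monK_ne_zero (Finset.ne_of_mem_erase hp))

lemma Omega0_sub (P Q : (ℤ × ℤ) →₀ ℤ) : Omega0 (P - Q) = Omega0 P / Omega0 Q := by
  have := Omega0_add (P - Q) Q
  rw [sub_add_cancel] at this
  field_simp [this, Omega0_ne_zero]
  exact this.symm

lemma Omega0_sum {α : Type*} (s : Finset α) (f : α → (ℤ × ℤ) →₀ ℤ) :
    Omega0 (∑ x ∈ s, f x) = ∏ x ∈ s, Omega0 (f x) := by
  classical
  induction s using Finset.induction_on with
  | empty => simp [Omega0_zero]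
  | insert a s h ih => rw [Finset.sum_insert h, Finset.prod_insert h, Omega0_add, ih]

lemma Omega0_lmono {i j : ℤ} (h : (i, j) ≠ ((0 : ℤ), (0 : ℤ))) :
    Omega0 (lmono i j) = 1 - monK i j := by
  have hs : (lmono i j).support = {(i, j)} := Finsupp.support_single_ne_zero _ one_ne_zero
  rw [Omega0, hs, Finset.erase_eq_of_notMem
    (fun hm => h (by simpa using (Finset.mem_singleton.mp hm).symm)), Finset.prod_singleton]
  simp [lmono, Finsupp.single_apply]

def rowLen (μ : Finset (ℕ × ℕ)) (b : ℕ) : ℕ := (μ.filter fun y => y.2 = b).card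
def colLen (μ : Finset (ℕ × ℕ)) (a : ℕ) : ℕ := (μ.filter fun y => y.1 = a).card

lemma initial_seg (S : Finset ℕ) (hS : ∀ x ∈ S, ∀ y, y ≤ x → y ∈ S) (n : ℕ) :
    n ∈ S ↔ n < S.card := by
  constructor
  · intro hn
    have hsub : Finset.range (n + 1) ⊆ S := fun m hm =>
      hS n hn m (by simpa using Nat.lt_succ_iff.mp (Finset.mem_range.mp hm))
    have := Finset.card_le_card hsub
    simpa using this
  · intro hn
    by_contra hns
    have hsub : S ⊆ Finset.range n := by
      intro m hm
      rw [Finset.mem_range]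
      by_contra hmn
      exact hns (hS m hm n (by omega))
    have := Finset.card_le_card hsub
    simp at this; omega

lemma mem_iff_lt_rowLen {ν : Finset (ℕ × ℕ)} (hν : IsYoung ν) (a b : ℕ) :
    (a, b) ∈ ν ↔ a < rowLen ν b := by
  set S := (ν.filter fun y => y.2 = b).image Prod.fst with hS
  have hcard : S.card = rowLen ν b := by
    rw [hS, rowLen, Finset.card_image_of_injOn]
    intro y hy z hz hyz
    simp only [Finset.mem_coe, Finset.mem_filter] at hy hz
    exact Prod.ext hyz (hy.2.trans hz.2.symm)
  have hmem : ∀ a', a' ∈ S ↔ (a', b) ∈ ν := by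
    intro a'
    simp only [hS, Finset.mem_image, Finset.mem_filter]
    constructor
    · rintro ⟨y, ⟨hy, hy2⟩, rfl⟩; rwa [← hy2, Prod.mk.eta]
    · intro h; exact ⟨(a', b), ⟨h, rfl⟩, rfl⟩
  rw [← hmem, ← hcard]
  exact initial_seg S (fun x hx y hy => (hmem y).mpr
    (hν x b y b ((hmem x).mp hx) hy le_rfl)) a

lemma mem_iff_lt_colLen {ν : Finset (ℕ × ℕ)} (hν : IsYoung ν) (a b : ℕ) :
    (a, b) ∈ ν ↔ b < colLen ν a := by
  set S := (ν.filter fun y => y.1 = a).image Prod.snd with hS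
  have hcard : S.card = colLen ν a := by
    rw [hS, colLen, Finset.card_image_of_injOn]
    intro y hy z hz hyz
    simp only [Finset.mem_coe, Finset.mem_filter] at hy hz
    exact Prod.ext (hy.2.trans hz.2.symm) hyz
  have hmem : ∀ b', b' ∈ S ↔ (a, b') ∈ ν := by
    intro b'
    simp only [hS, Finset.mem_image, Finset.mem_filter]
    constructor
    · rintro ⟨y, ⟨hy, hy2⟩, rfl⟩; rwa [← hy2, Prod.mk.eta]
    · intro h; exact ⟨(a, b'), ⟨h, rfl⟩, rfl⟩
  rw [← hmem, ← hcard]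
  exact initial_seg S (fun x hx y hy => (hmem y).mpr
    (hν a x a y ((hmem x).mp hx) le_rfl hy)) b

lemma arm_eq {ν : Finset (ℕ × ℕ)} (hν : IsYoung ν) {a b : ℕ} (h : (a, b) ∈ ν) :
    arm ν (a, b) + (a + 1) = rowLen ν b := by
  have hcard : arm ν (a, b) = (Finset.Ico (a + 1) (rowLen ν b)).card := by
    rw [arm]
    apply Finset.card_bij (fun y _ => y.1)
    · intro y hy
      simp only [Finset.mem_filter] at hy
      obtain ⟨hyν, hy2, hy1⟩ := hy
      have : y.1 < rowLen ν b := by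
        rw [← mem_iff_lt_rowLen hν]
        rwa [← hy2, Prod.mk.eta]
      simp only [Finset.mem_Ico]; omega
    · intro y hy z hz hyz
      simp only [Finset.mem_filter] at hy hz
      exact Prod.ext hyz (hy.2.1.trans hz.2.1.symm)
    · intro a' ha'
      simp only [Finset.mem_Ico] at ha'
      exact ⟨(a', b), Finset.mem_filter.mpr
        ⟨(mem_iff_lt_rowLen hν a' b).mpr ha'.2, rfl, by omega⟩, rfl⟩
  have hle : a < rowLen ν b := (mem_iff_lt_rowLen hν a b).mp h
  rw [hcard, Nat.card_Ico]; omega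

lemma leg_eq {ν : Finset (ℕ × ℕ)} (hν : IsYoung ν) {a b : ℕ} (h : (a, b) ∈ ν) :
    leg ν (a, b) + (b + 1) = colLen ν a := by
  have hcard : leg ν (a, b) = (Finset.Ico (b + 1) (colLen ν a)).card := by
    rw [leg]
    apply Finset.card_bij (fun y _ => y.2)
    · intro y hy
      simp only [Finset.mem_filter] at hy
      obtain ⟨hyν, hy1, hy2⟩ := hy
      have : y.2 < colLen ν a := by
        rw [← mem_iff_lt_colLen hν]
        rwa [← hy1, Prod.mk.eta]
      simp only [Finset.mem_Ico]; omega
    · intro y hy z hz hyz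
      simp only [Finset.mem_filter] at hy hz
      exact Prod.ext (hy.2.1.trans hz.2.1.symm) hyz
    · intro b' hb'
      simp only [Finset.mem_Ico] at hb'
      exact ⟨(a, b'), Finset.mem_filter.mpr
        ⟨(mem_iff_lt_colLen hν a b').mpr hb'.2, rfl, by omega⟩, rfl⟩
  have hle : b < colLen ν a := (mem_iff_lt_colLen hν a b).mp h
  rw [hcard, Nat.card_Ico]; omega

section corner
variable {ν : Finset (ℕ × ℕ)} {c r : ℕ} (hν : IsYoung ν)
  (hx : (c, r) ∈ ν) (hμ : IsYoung (ν.erase (c, r)))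

include hx hμ in
lemma not_mem_right : (c + 1, r) ∉ ν := by
  intro h
  have h1 : (c + 1, r) ∈ ν.erase (c, r) :=
    Finset.mem_erase.mpr ⟨by simp, h⟩
  have h2 : (c, r) ∈ ν.erase (c, r) := hμ (c+1) r c r h1 (by omega) le_rfl
  exact (Finset.notMem_erase _ _) h2

include hx hμ in
lemma not_mem_up : (c, r + 1) ∉ ν := by
  intro h
  have h1 : (c, r + 1) ∈ ν.erase (c, r) :=
    Finset.mem_erase.mpr ⟨by simp, h⟩
  have h2 : (c, r) ∈ ν.erase (c, r) := hμ c (r+1) c r h1 le_rfl (by omega)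
  exact (Finset.notMem_erase _ _) h2

include hν hx hμ in
lemma rowLen_nu_r : rowLen ν r = c + 1 := by
  have h1 : c < rowLen ν r := (mem_iff_lt_rowLen hν c r).mp hx
  have h2 : ¬ (c + 1 < rowLen ν r) := fun h =>
    not_mem_right hx hμ ((mem_iff_lt_rowLen hν (c+1) r).mpr h)
  omega

include hν hx hμ in
lemma colLen_nu_c : colLen ν c = r + 1 := by
  have h1 : r < colLen ν c := (mem_iff_lt_colLen hν c r).mp hx
  have h2 : ¬ (r + 1 < colLen ν c) := fun h =>
    not_mem_up hx hμ ((mem_iff_lt_colLen hν c (r+1)).mpr h)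
  omega

lemma rowLen_erase_ne {b : ℕ} (hb : b ≠ r) : rowLen (ν.erase (c, r)) b = rowLen ν b := by
  rw [rowLen, Finset.filter_erase, Finset.erase_eq_of_notMem (by simp [hb.symm]), rowLen]

lemma colLen_erase_ne {a : ℕ} (ha : a ≠ c) : colLen (ν.erase (c, r)) a = colLen ν a := by
  rw [colLen, Finset.filter_erase, Finset.erase_eq_of_notMem (by simp [ha.symm]), colLen]

include hν hx hμ in
lemma rowLen_erase_self : rowLen (ν.erase (c, r)) r = c := by
  rw [rowLen, Finset.filter_erase, Finset.card_erase_of_mem (by simp [hx])]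
  have := rowLen_nu_r hν hx hμ
  rw [rowLen] at this; omega

include hν hx hμ in
lemma colLen_erase_self : colLen (ν.erase (c, r)) c = r := by
  rw [colLen, Finset.filter_erase, Finset.card_erase_of_mem (by simp [hx])]
  have := colLen_nu_c hν hx hμ
  rw [colLen] at this; omega

end corner

section tel
variable {A : Type*} [AddCommGroup A]

lemma tel_Ico (f : ℕ → A) {m n : ℕ} (hmn : m ≤ n) :
    ∑ a ∈ Finset.Ico m n, (f a - f (a + 1)) = f m - f n := by
  rw [Finset.sum_Ico_eq_sum_range]
  have := Finset.sum_range_sub' (fun i => f (m + i)) (n - m)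
  simp only [Nat.add_zero] at this
  calc ∑ i ∈ Finset.range (n - m), (f (m + i) - f (m + i + 1))
      = ∑ i ∈ Finset.range (n - m), ((fun i => f (m + i)) i - (fun i => f (m + i)) (i + 1)) := by
        refine Finset.sum_congr rfl fun i _ => ?_
        have e : m + i + 1 = m + (i + 1) := by omega
        simp only [e]
    _ = f m - f (m + (n - m)) := this
    _ = f m - f n := by rw [Nat.add_sub_cancel' hmn]

lemma swap_region (c r M : ℕ) (h w : ℕ → ℕ)
    (hS : ∀ a b : ℕ, c < a → (b < h a ↔ (b < r ∧ a < w b)))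
    (hwhi : ∀ b, b < r → w b ≤ M) (f : ℕ → ℕ → A) :
    ∑ a ∈ Finset.Ico (c + 1) M, ∑ b ∈ Finset.range (h a), f a b =
      ∑ b ∈ Finset.range r, ∑ a ∈ Finset.Ico (c + 1) (w b), f a b := by
  have step1 : ∀ a ∈ Finset.Ico (c + 1) M,
      ∑ b ∈ Finset.range (h a), f a b =
        ∑ b ∈ Finset.range r, if b < h a then f a b else 0 := by
    intro a ha
    rw [Finset.mem_Ico] at ha
    rw [← Finset.sum_filter]
    congr 1
    ext b
    simp only [Finset.mem_filter, Finset.mem_range]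
    constructor
    · intro hb
      have := (hS a b (by omega)).mp hb
      exact ⟨this.1, hb⟩
    · exact fun hb => hb.2
  rw [Finset.sum_congr rfl step1, Finset.sum_comm]
  refine Finset.sum_congr rfl fun b hb => ?_
  rw [Finset.mem_range] at hb
  rw [← Finset.sum_filter]
  congr 1
  ext a
  simp only [Finset.mem_filter, Finset.mem_Ico]
  constructor
  · rintro ⟨⟨h1, h2⟩, h3⟩
    exact ⟨h1, ((hS a b (by omega)).mp h3).2⟩
  · rintro ⟨h1, h2⟩
    refine ⟨⟨h1, by have := hwhi b hb; omega⟩, (hS a b (by omega)).mpr ⟨hb, h2⟩⟩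

end tel

abbrev F' : Type := (ℤ × ℤ) →₀ ℤ

lemma master (c r M : ℕ) (h w : ℕ → ℕ) (hcM : c < M) (hc : h c = r)
    (hS : ∀ a b : ℕ, c < a → (b < h a ↔ (b < r ∧ a < w b)))
    (hwlo : ∀ b, b < r → c < w b) (hwhi : ∀ b, b < r → w b ≤ M) :
    lmono ((c:ℤ)+1) ((r:ℤ)+1) - ∑ a ∈ Finset.range M, ∑ b ∈ Finset.range (h a),
        (lmono ((c:ℤ)-a) ((r:ℤ)-b) - lmono ((c:ℤ)-a+1) ((r:ℤ)-b)
          - lmono ((c:ℤ)-a) ((r:ℤ)-b+1) + lmono ((c:ℤ)-a+1) ((r:ℤ)-b+1))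
    = lmono 1 1
      + ∑ a ∈ Finset.range c,
          (lmono ((c:ℤ)-a+1) (-(((h a : ℤ) - 1 - r))) - lmono ((c:ℤ)-a) (-((h a : ℤ) - 1 - r)))
      + ∑ b ∈ Finset.range r,
          (lmono (-((w b : ℤ) - 1 - c)) ((r:ℤ)-b+1) - lmono (-((w b : ℤ) - 1 - c)) ((r:ℤ)-b)) := by
  -- abbreviations
  set Q : ℕ → ℕ → F' := fun a b =>
    (lmono ((c:ℤ)-a) ((r:ℤ)-b) - lmono ((c:ℤ)-a+1) ((r:ℤ)-b)
      - lmono ((c:ℤ)-a) ((r:ℤ)-b+1) + lmono ((c:ℤ)-a+1) ((r:ℤ)-b+1)) with hQ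
  set T : ℕ → F' := fun a =>
    lmono ((c:ℤ)+1-a) ((r:ℤ)+1-h a) - lmono ((c:ℤ)-a) ((r:ℤ)+1-h a) with hT
  set W : ℕ → F' := fun b =>
    lmono ((c:ℤ)+1-w b) ((r:ℤ)+1-b) - lmono ((c:ℤ)+1-w b) ((r:ℤ)-b) with hW
  -- the inner (column) telescope
  have inner : ∀ a n : ℕ, ∑ b ∈ Finset.range n, Q a b =
      (lmono ((c:ℤ)+1-a) ((r:ℤ)+1) - lmono ((c:ℤ)-a) ((r:ℤ)+1))
        - (lmono ((c:ℤ)+1-a) ((r:ℤ)+1-n) - lmono ((c:ℤ)-a) ((r:ℤ)+1-n)) := by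
    intro a n
    have tel := Finset.sum_range_sub'
      (f := fun b : ℕ => lmono ((c:ℤ)+1-a) ((r:ℤ)+1-b) - lmono ((c:ℤ)-a) ((r:ℤ)+1-b)) n
    calc ∑ b ∈ Finset.range n, Q a b
        = ∑ b ∈ Finset.range n,
            ((lmono ((c:ℤ)+1-a) ((r:ℤ)+1-b) - lmono ((c:ℤ)-a) ((r:ℤ)+1-b))
              - (lmono ((c:ℤ)+1-a) ((r:ℤ)+1-(b+1:ℕ)) - lmono ((c:ℤ)-a) ((r:ℤ)+1-(b+1:ℕ)))) := by
          refine Finset.sum_congr rfl fun b _ => ?_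
          rw [hQ]
          push_cast
          have e1 : (r:ℤ)+1-((b:ℤ)+1) = (r:ℤ)-b := by ring
          have e2 : (r:ℤ)+1-(b:ℤ) = (r:ℤ)-b+1 := by ring
          have e3 : (c:ℤ)+1-(a:ℤ) = (c:ℤ)-a+1 := by ring
          rw [e1, e2, e3]
          abel
      _ = _ := by
          rw [tel]
          norm_num
  -- column telescope of the leading parts, over range M
  have outer : ∀ N : ℕ, ∑ a ∈ Finset.range N,
      (lmono ((c:ℤ)+1-a) ((r:ℤ)+1) - lmono ((c:ℤ)-a) ((r:ℤ)+1))
      = lmono ((c:ℤ)+1) ((r:ℤ)+1) - lmono ((c:ℤ)+1-N) ((r:ℤ)+1) := by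
    intro N
    have tel := Finset.sum_range_sub' (f := fun a : ℕ => lmono ((c:ℤ)+1-a) ((r:ℤ)+1)) N
    calc ∑ a ∈ Finset.range N, (lmono ((c:ℤ)+1-a) ((r:ℤ)+1) - lmono ((c:ℤ)-a) ((r:ℤ)+1))
        = ∑ a ∈ Finset.range N,
            (lmono ((c:ℤ)+1-a) ((r:ℤ)+1) - lmono ((c:ℤ)+1-(a+1:ℕ)) ((r:ℤ)+1)) := by
          refine Finset.sum_congr rfl fun a _ => ?_
          push_cast
          have e1 : (c:ℤ)+1-((a:ℤ)+1) = (c:ℤ)-a := by ring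
          rw [e1]
      _ = _ := by
          rw [tel]
          norm_num
  -- E1
  have E1 : ∑ a ∈ Finset.range M, ∑ b ∈ Finset.range (h a), Q a b =
      (lmono ((c:ℤ)+1) ((r:ℤ)+1) - lmono ((c:ℤ)+1-M) ((r:ℤ)+1))
        - ∑ a ∈ Finset.range M, T a := by
    rw [Finset.sum_congr rfl fun a _ => inner a (h a), Finset.sum_sub_distrib, outer M]
  -- E2 : split the T-sum
  have E2 : ∑ a ∈ Finset.range M, T a =
      ∑ a ∈ Finset.range c, T a + (lmono 1 1 - lmono 0 1)
        + ∑ a ∈ Finset.Ico (c+1) M, T a := by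
    have s1 : ∑ a ∈ Finset.range (c+1), T a + ∑ a ∈ Finset.Ico (c+1) M, T a
        = ∑ a ∈ Finset.range M, T a := by
      rw [Finset.range_eq_Ico, Finset.range_eq_Ico]
      exact Finset.sum_Ico_consecutive T (by omega : 0 ≤ c+1) (by omega : c+1 ≤ M)
    have s2 : ∑ a ∈ Finset.range (c+1), T a = ∑ a ∈ Finset.range c, T a + T c :=
      Finset.sum_range_succ T c
    have s3 : T c = lmono 1 1 - lmono 0 1 := by
      rw [hT]
      simp only [hc]
      have e1 : (c:ℤ)+1-c = 1 := by ring
      have e2 : (r:ℤ)+1-r = 1 := by ring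
      have e3 : (c:ℤ)-c = 0 := by ring
      rw [e1, e2, e3]
    rw [← s1, s2, s3]
  -- E3 : column-side evaluation over the region S
  have E3 : ∑ a ∈ Finset.Ico (c+1) M, ∑ b ∈ Finset.range (h a), Q a b =
      (lmono 0 ((r:ℤ)+1) - lmono ((c:ℤ)+1-M) ((r:ℤ)+1))
        - ∑ a ∈ Finset.Ico (c+1) M, T a := by
    rw [Finset.sum_congr rfl fun a _ => inner a (h a), Finset.sum_sub_distrib]
    congr 1
    have tel := tel_Ico (f := fun a : ℕ => lmono ((c:ℤ)+1-a) ((r:ℤ)+1)) (show c+1 ≤ M by omega)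
    calc ∑ a ∈ Finset.Ico (c+1) M,
          (lmono ((c:ℤ)+1-a) ((r:ℤ)+1) - lmono ((c:ℤ)-a) ((r:ℤ)+1))
        = ∑ a ∈ Finset.Ico (c+1) M,
            (lmono ((c:ℤ)+1-a) ((r:ℤ)+1) - lmono ((c:ℤ)+1-(a+1:ℕ)) ((r:ℤ)+1)) := by
          refine Finset.sum_congr rfl fun a _ => ?_
          push_cast
          have e1 : (c:ℤ)+1-((a:ℤ)+1) = (c:ℤ)-a := by ring
          rw [e1]
      _ = lmono ((c:ℤ)+1-(c+1:ℕ)) ((r:ℤ)+1) - lmono ((c:ℤ)+1-M) ((r:ℤ)+1) := tel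
      _ = lmono 0 ((r:ℤ)+1) - lmono ((c:ℤ)+1-M) ((r:ℤ)+1) := by
          push_cast
          have e1 : (c:ℤ)+1-((c:ℤ)+1) = 0 := by ring
          rw [e1]
  -- E4 : row-side evaluation over the region S
  have E4 : ∑ a ∈ Finset.Ico (c+1) M, ∑ b ∈ Finset.range (h a), Q a b =
      (lmono 0 ((r:ℤ)+1) - lmono 0 1) - ∑ b ∈ Finset.range r, W b := by
    rw [swap_region c r M h w hS hwhi Q]
    have rowcomp : ∀ b ∈ Finset.range r, ∑ a ∈ Finset.Ico (c+1) (w b), Q a b =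
        (lmono 0 ((r:ℤ)+1-b) - lmono 0 ((r:ℤ)-b)) - W b := by
      intro b hb
      rw [Finset.mem_range] at hb
      have tel := tel_Ico (f := fun a : ℕ =>
        lmono ((c:ℤ)+1-a) ((r:ℤ)+1-b) - lmono ((c:ℤ)+1-a) ((r:ℤ)-b)) (hwlo b hb)
      calc ∑ a ∈ Finset.Ico (c+1) (w b), Q a b
          = ∑ a ∈ Finset.Ico (c+1) (w b),
              ((lmono ((c:ℤ)+1-a) ((r:ℤ)+1-b) - lmono ((c:ℤ)+1-a) ((r:ℤ)-b))
                - (lmono ((c:ℤ)+1-(a+1:ℕ)) ((r:ℤ)+1-b) - lmono ((c:ℤ)+1-(a+1:ℕ)) ((r:ℤ)-b))) := by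
            refine Finset.sum_congr rfl fun a _ => ?_
            rw [hQ]
            push_cast
            have e1 : (c:ℤ)+1-((a:ℤ)+1) = (c:ℤ)-a := by ring
            have e2 : (c:ℤ)+1-(a:ℤ) = (c:ℤ)-a+1 := by ring
            have e3 : (r:ℤ)+1-(b:ℤ) = (r:ℤ)-b+1 := by ring
            rw [e1, e2, e3]
            abel
        _ = (lmono ((c:ℤ)+1-(c+1:ℕ)) ((r:ℤ)+1-b) - lmono ((c:ℤ)+1-(c+1:ℕ)) ((r:ℤ)-b))
              - (lmono ((c:ℤ)+1-w b) ((r:ℤ)+1-b) - lmono ((c:ℤ)+1-w b) ((r:ℤ)-b)) := tel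
        _ = (lmono 0 ((r:ℤ)+1-b) - lmono 0 ((r:ℤ)-b)) - W b := by
            rw [hW]
            push_cast
            have e1 : (c:ℤ)+1-((c:ℤ)+1) = 0 := by ring
            rw [e1]
    rw [Finset.sum_congr rfl rowcomp, Finset.sum_sub_distrib]
    congr 1
    have tel := Finset.sum_range_sub' (f := fun b : ℕ => lmono 0 ((r:ℤ)+1-b)) r
    calc ∑ b ∈ Finset.range r, (lmono 0 ((r:ℤ)+1-b) - lmono 0 ((r:ℤ)-b))
        = ∑ b ∈ Finset.range r, (lmono 0 ((r:ℤ)+1-b) - lmono 0 ((r:ℤ)+1-(b+1:ℕ))) := by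
          refine Finset.sum_congr rfl fun b _ => ?_
          push_cast
          have e1 : (r:ℤ)+1-((b:ℤ)+1) = (r:ℤ)-b := by ring
          rw [e1]
      _ = lmono 0 ((r:ℤ)+1-(0:ℕ)) - lmono 0 ((r:ℤ)+1-r) := tel
      _ = lmono 0 ((r:ℤ)+1) - lmono 0 1 := by
          have e1 : (r:ℤ)+1-r = 1 := by ring
          rw [e1]
          norm_num
  -- combine
  have E5 : ∑ a ∈ Finset.Ico (c+1) M, T a =
      (lmono 0 ((r:ℤ)+1) - lmono ((c:ℤ)+1-M) ((r:ℤ)+1))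
        - ((lmono 0 ((r:ℤ)+1) - lmono 0 1) - ∑ b ∈ Finset.range r, W b) := by
    rw [← E4, E3]
    abel
  -- rewrite the target sums into T and W form
  have targT : ∑ a ∈ Finset.range c,
      (lmono ((c:ℤ)-a+1) (-(((h a : ℤ) - 1 - r))) - lmono ((c:ℤ)-a) (-((h a : ℤ) - 1 - r)))
      = ∑ a ∈ Finset.range c, T a := by
    refine Finset.sum_congr rfl fun a _ => ?_
    rw [hT]
    have e1 : (c:ℤ)-a+1 = (c:ℤ)+1-a := by ring
    have e2 : (-(((h a : ℤ) - 1 - r))) = (r:ℤ)+1-h a := by ring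
    rw [e1, e2]
  have targW : ∑ b ∈ Finset.range r,
      (lmono (-((w b : ℤ) - 1 - c)) ((r:ℤ)-b+1) - lmono (-((w b : ℤ) - 1 - c)) ((r:ℤ)-b))
      = ∑ b ∈ Finset.range r, W b := by
    refine Finset.sum_congr rfl fun b _ => ?_
    rw [hW]
    have e1 : (-((w b : ℤ) - 1 - c)) = (c:ℤ)+1-w b := by ring
    have e2 : (r:ℤ)-b+1 = (r:ℤ)+1-b := by ring
    rw [e1, e2]
  have fold : ∑ a ∈ Finset.range M, ∑ b ∈ Finset.range (h a),
      (lmono ((c:ℤ)-a) ((r:ℤ)-b) - lmono ((c:ℤ)-a+1) ((r:ℤ)-b)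
        - lmono ((c:ℤ)-a) ((r:ℤ)-b+1) + lmono ((c:ℤ)-a+1) ((r:ℤ)-b+1))
      = ∑ a ∈ Finset.range M, ∑ b ∈ Finset.range (h a), Q a b := rfl
  rw [targT, targW, fold, E1, E2, E5]
  abel

end helpers

theorem statement1 (ν : Finset (ℕ × ℕ)) (c r : ℕ) (hν : IsYoung ν)
    (hx : (c, r) ∈ ν) (hμ : IsYoung (ν.erase (c, r))) :
    (1 - q * t) *
        (∏ y ∈ ν.filter fun y => y.2 = r ∧ y.1 < c,
          (1 - monK (1 + (arm ν y : ℤ)) (-(leg ν y : ℤ))) /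
            (1 - monK (1 + (arm (ν.erase (c, r)) y : ℤ)) (-(leg (ν.erase (c, r)) y : ℤ)))) *
        (∏ y ∈ ν.filter fun y => y.1 = c ∧ y.2 < r,
          (1 - monK (-(arm ν y : ℤ)) ((leg ν y : ℤ) + 1)) /
            (1 - monK (-(arm (ν.erase (c, r)) y : ℤ)) ((leg (ν.erase (c, r)) y : ℤ) + 1))) =
      Omega0 (lmono ((c : ℤ) + 1) ((r : ℤ) + 1) -
        ∑ x ∈ ν.erase (c, r), quadr ((c : ℤ) - (x.1 : ℤ)) ((r : ℤ) - (x.2 : ℤ))) := by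
  classical
  set μ : Finset (ℕ × ℕ) := ν.erase (c, r) with hμdef
  set M : ℕ := ν.sup Prod.fst + 1 with hMdef
  -- basic corner facts
  have hcr1 : (c + 1, r) ∉ ν := not_mem_right hx hμ
  have hrow : rowLen ν r = c + 1 := rowLen_nu_r hν hx hμ
  have hcol : colLen ν c = r + 1 := colLen_nu_c hν hx hμ
  have hrowμ : rowLen μ r = c := rowLen_erase_self hν hx hμ
  have hcolμ : colLen μ c = r := colLen_erase_self hν hx hμ
  have memM : ∀ x ∈ ν, x.1 < M := fun x hx' => by
    have := Finset.le_sup (f := Prod.fst) hx'; omega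
  have hcM : c < M := memM (c, r) hx
  have hS : ∀ a b : ℕ, c < a → (b < colLen μ a ↔ (b < r ∧ a < rowLen ν b)) := by
    intro a b hca
    constructor
    · intro hb
      have habμ : (a, b) ∈ μ := (mem_iff_lt_colLen hμ a b).mpr hb
      have habν : (a, b) ∈ ν := Finset.mem_of_mem_erase habμ
      have hbr : b < r := by
        by_contra hbr
        exact hcr1 (hν a b (c+1) r habν (by omega) (by omega))
      exact ⟨hbr, (mem_iff_lt_rowLen hν a b).mp habν⟩
    · rintro ⟨hbr, haw⟩
      have habν : (a, b) ∈ ν := (mem_iff_lt_rowLen hν a b).mpr haw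
      have habμ : (a, b) ∈ μ := Finset.mem_erase.mpr ⟨by simp; omega, habν⟩
      exact (mem_iff_lt_colLen hμ a b).mp habμ
  have hwlo : ∀ b, b < r → c < rowLen ν b := fun b hb =>
    (mem_iff_lt_rowLen hν c b).mp (hν c r c b hx le_rfl (by omega))
  have hwhi : ∀ b, b < r → rowLen ν b ≤ M := by
    intro b hb
    by_contra hcon
    push_neg at hcon
    have : (M, b) ∈ ν := (mem_iff_lt_rowLen hν M b).mpr (by omega)
    have := memM _ this
    simp at this
  -- reindex the sum over μ as a double sum
  have hsum : ∑ x ∈ μ, quadr ((c : ℤ) - (x.1 : ℤ)) ((r : ℤ) - (x.2 : ℤ))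
      = ∑ a ∈ Finset.range M, ∑ b ∈ Finset.range (colLen μ a),
          quadr ((c : ℤ) - (a : ℤ)) ((r : ℤ) - (b : ℤ)) := by
    rw [← Finset.sum_sigma (Finset.range M) (fun a => Finset.range (colLen μ a))
      (fun p => quadr ((c : ℤ) - (p.1 : ℤ)) ((r : ℤ) - (p.2 : ℤ)))]
    refine Finset.sum_nbij' (fun x => ⟨x.1, x.2⟩) (fun p => (p.1, p.2)) ?_ ?_ ?_ ?_ ?_
    · rintro ⟨a, b⟩ hab
      have h1 : a < M := memM _ (Finset.mem_of_mem_erase hab)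
      have h2 : b < colLen μ a := (mem_iff_lt_colLen hμ a b).mp hab
      exact Finset.mem_sigma.mpr ⟨Finset.mem_range.mpr h1, Finset.mem_range.mpr h2⟩
    · rintro ⟨a, b⟩ hp
      rw [Finset.mem_sigma, Finset.mem_range, Finset.mem_range] at hp
      exact (mem_iff_lt_colLen hμ a b).mpr hp.2
    · rintro ⟨a, b⟩ _; rfl
    · rintro ⟨a, b⟩ _; rfl
    · rintro ⟨a, b⟩ _; rfl
  have key := master c r M (colLen μ) (rowLen ν) hcM hcolμ hS hwlo hwhi
  have fold : ∑ a ∈ Finset.range M, ∑ b ∈ Finset.range (colLen μ a),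
      quadr ((c : ℤ) - (a : ℤ)) ((r : ℤ) - (b : ℤ))
      = ∑ a ∈ Finset.range M, ∑ b ∈ Finset.range (colLen μ a),
        (lmono ((c:ℤ)-a) ((r:ℤ)-b) - lmono ((c:ℤ)-a+1) ((r:ℤ)-b)
          - lmono ((c:ℤ)-a) ((r:ℤ)-b+1) + lmono ((c:ℤ)-a+1) ((r:ℤ)-b+1)) := rfl
  rw [hsum, fold, key]
  rw [Omega0_add, Omega0_add, Omega0_sum, Omega0_sum,
    Omega0_lmono (by intro hp; rw [Prod.mk.injEq] at hp; exact one_ne_zero hp.1)]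
  -- convert the row product
  have hL1 : (∏ y ∈ ν.filter fun y => y.2 = r ∧ y.1 < c,
        (1 - monK (1 + (arm ν y : ℤ)) (-(leg ν y : ℤ))) /
          (1 - monK (1 + (arm μ y : ℤ)) (-(leg μ y : ℤ))))
      = ∏ a ∈ Finset.range c, Omega0
          (lmono ((c:ℤ)-a+1) (-(((colLen μ a) : ℤ) - 1 - r))
            - lmono ((c:ℤ)-a) (-(((colLen μ a) : ℤ) - 1 - r))) := by
    refine Finset.prod_nbij' (fun y => y.1) (fun a => (a, r)) ?_ ?_ ?_ ?_ ?_
    · rintro ⟨a, b⟩ hy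
      rw [Finset.mem_filter] at hy
      exact Finset.mem_range.mpr hy.2.2
    · intro a ha
      rw [Finset.mem_range] at ha
      exact Finset.mem_filter.mpr ⟨hν c r a r hx (by omega) le_rfl, rfl, ha⟩
    · rintro ⟨a, b⟩ hy
      rw [Finset.mem_filter] at hy
      obtain ⟨-, h2, -⟩ := hy
      simp only at h2
      rw [h2]
    · intro a _; rfl
    · rintro ⟨a, b⟩ hy
      rw [Finset.mem_filter] at hy
      obtain ⟨hyν, hbr, hac⟩ := hy
      simp only at hbr hac
      have hy' : ((a, b) : ℕ × ℕ) = (a, r) := by rw [hbr]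
      rw [hy'] at hyν ⊢
      beta_reduce
      have hμmem : (a, r) ∈ μ := Finset.mem_erase.mpr ⟨by simp; omega, hyν⟩
      have e_arm : arm ν (a, r) + (a + 1) = c + 1 := (arm_eq hν hyν).trans hrow
      have e_leg : leg ν (a, r) + (r + 1) = colLen μ a :=
        (leg_eq hν hyν).trans (colLen_erase_ne (by omega)).symm
      have e_armμ : arm μ (a, r) + (a + 1) = c := (arm_eq hμ hμmem).trans hrowμ
      have e_legμ : leg μ (a, r) + (r + 1) = colLen μ a := leg_eq hμ hμmem
      rw [Omega0_sub,
        Omega0_lmono (by intro hp; rw [Prod.mk.injEq] at hp; have := hp.1; omega),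
        Omega0_lmono (by intro hp; rw [Prod.mk.injEq] at hp; have := hp.1; omega)]
      have i1 : (1 + (arm ν (a, r) : ℤ)) = (c:ℤ) - a + 1 := by omega
      have i2 : (-(leg ν (a, r) : ℤ)) = -(((colLen μ a) : ℤ) - 1 - r) := by omega
      have i3 : (1 + (arm μ (a, r) : ℤ)) = (c:ℤ) - a := by omega
      have i4 : (-(leg μ (a, r) : ℤ)) = -(((colLen μ a) : ℤ) - 1 - r) := by omega
      rw [i1, i2, i3, i4]
  -- convert the column product
  have hL2 : (∏ y ∈ ν.filter fun y => y.1 = c ∧ y.2 < r,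
        (1 - monK (-(arm ν y : ℤ)) ((leg ν y : ℤ) + 1)) /
          (1 - monK (-(arm μ y : ℤ)) ((leg μ y : ℤ) + 1)))
      = ∏ b ∈ Finset.range r, Omega0
          (lmono (-(((rowLen ν b) : ℤ) - 1 - c)) ((r:ℤ)-b+1)
            - lmono (-(((rowLen ν b) : ℤ) - 1 - c)) ((r:ℤ)-b)) := by
    refine Finset.prod_nbij' (fun y => y.2) (fun b => (c, b)) ?_ ?_ ?_ ?_ ?_
    · rintro ⟨a, b⟩ hy
      rw [Finset.mem_filter] at hy
      exact Finset.mem_range.mpr hy.2.2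
    · intro b hb
      rw [Finset.mem_range] at hb
      exact Finset.mem_filter.mpr ⟨hν c r c b hx le_rfl (by omega), rfl, hb⟩
    · rintro ⟨a, b⟩ hy
      rw [Finset.mem_filter] at hy
      obtain ⟨-, h2, -⟩ := hy
      simp only at h2
      rw [h2]
    · intro b _; rfl
    · rintro ⟨a, b⟩ hy
      rw [Finset.mem_filter] at hy
      obtain ⟨hyν, hac, hbr⟩ := hy
      simp only at hac hbr
      have hy' : ((a, b) : ℕ × ℕ) = (c, b) := by rw [hac]
      rw [hy'] at hyν ⊢
      beta_reduce
      have hμmem : (c, b) ∈ μ := Finset.mem_erase.mpr ⟨by simp; omega, hyν⟩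
      have e_arm : arm ν (c, b) + (c + 1) = rowLen ν b := arm_eq hν hyν
      have e_leg : leg ν (c, b) + (b + 1) = r + 1 := (leg_eq hν hyν).trans hcol
      have e_armμ : arm μ (c, b) + (c + 1) = rowLen ν b :=
        (arm_eq hμ hμmem).trans (rowLen_erase_ne (by omega))
      have e_legμ : leg μ (c, b) + (b + 1) = r := (leg_eq hμ hμmem).trans hcolμ
      rw [Omega0_sub,
        Omega0_lmono (by intro hp; rw [Prod.mk.injEq] at hp; have := hp.2; omega),
        Omega0_lmono (by intro hp; rw [Prod.mk.injEq] at hp; have := hp.2; omega)]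
      have i1 : (-(arm ν (c, b) : ℤ)) = -(((rowLen ν b) : ℤ) - 1 - c) := by omega
      have i2 : ((leg ν (c, b) : ℤ) + 1) = (r:ℤ) - b + 1 := by omega
      have i3 : (-(arm μ (c, b) : ℤ)) = -(((rowLen ν b) : ℤ) - 1 - c) := by omega
      have i4 : ((leg μ (c, b) : ℤ) + 1) = (r:ℤ) - b := by omega
      rw [i1, i2, i3, i4]
  rw [hL1, hL2]
  have hqt : monK 1 1 = q * t := by rw [monK, zpow_one, zpow_one]
  rw [hqt]


end
end

section
/- Fix n ≥ 1 and let J ∈ Mat_n(ℂ) be the regular nilpotent Jordan block (ones on the superdiagonal, zeros elsewhere). Let Z := { g ∈ SL_n(ℂ) : gJ = Jg } be the centralizer of J in SL_n(ℂ), a topological group with the subspace topology. Then the quotient of Z by the connected component of its identity element is a group isomorphic to ℤ/nℤ. -/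
noncomputable section

/-- The regular nilpotent Jordan block: ones on the superdiagonal. -/
def Jmat (n : ℕ) : Matrix (Fin n) (Fin n) ℂ :=
  Matrix.of fun i j => if (i : ℕ) + 1 = (j : ℕ) then 1 else 0

instance (n : ℕ) : TopologicalSpace (Matrix.SpecialLinearGroup (Fin n) ℂ) :=
  instTopologicalSpaceSubtype

/-- The centralizer of the Jordan block `J` inside `SL_n(ℂ)`. -/
def Zcent (n : ℕ) : Subgroup (Matrix.SpecialLinearGroup (Fin n) ℂ) where
  carrier := { g | (g : Matrix (Fin n) (Fin n) ℂ) * Jmat n =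
    Jmat n * (g : Matrix (Fin n) (Fin n) ℂ) }
  one_mem' := by
    simp [Matrix.SpecialLinearGroup.coe_one]
  mul_mem' := by
    intro a b ha hb
    simp only [Set.mem_setOf_eq, Matrix.SpecialLinearGroup.coe_mul] at *
    rw [mul_assoc, hb, ← mul_assoc, ha, mul_assoc]
  inv_mem' := by
    intro a ha
    simp only [Set.mem_setOf_eq] at *
    have h1 : ((a⁻¹ : Matrix.SpecialLinearGroup (Fin n) ℂ) : Matrix (Fin n) (Fin n) ℂ) *
        (a : Matrix (Fin n) (Fin n) ℂ) = 1 := by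
      rw [← Matrix.SpecialLinearGroup.coe_mul, inv_mul_cancel,
        Matrix.SpecialLinearGroup.coe_one]
    have h2 : (a : Matrix (Fin n) (Fin n) ℂ) *
        ((a⁻¹ : Matrix.SpecialLinearGroup (Fin n) ℂ) : Matrix (Fin n) (Fin n) ℂ) = 1 := by
      rw [← Matrix.SpecialLinearGroup.coe_mul, mul_inv_cancel,
        Matrix.SpecialLinearGroup.coe_one]
    set A : Matrix (Fin n) (Fin n) ℂ := (a : Matrix (Fin n) (Fin n) ℂ)
    set B : Matrix (Fin n) (Fin n) ℂ :=
      ((a⁻¹ : Matrix.SpecialLinearGroup (Fin n) ℂ) : Matrix (Fin n) (Fin n) ℂ)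
    calc B * Jmat n = B * Jmat n * (A * B) := by rw [h2, mul_one]
      _ = B * (Jmat n * A) * B := by simp only [mul_assoc]
      _ = B * (A * Jmat n) * B := by rw [ha]
      _ = Jmat n * B := by rw [← mul_assoc B A (Jmat n), h1, one_mul]

namespace S8

variable {n : ℕ}

lemma mulJ_apply (A : Matrix (Fin n) (Fin n) ℂ) (i j : Fin n) :
    (A * Jmat n) i j =
      if h : 0 < (j : ℕ) then A i ⟨(j : ℕ) - 1, lt_of_le_of_lt (Nat.sub_le _ _) j.isLt⟩
      else 0 := by
  rw [Matrix.mul_apply]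
  simp only [Jmat, Matrix.of_apply, mul_ite, mul_one, mul_zero]
  split_ifs with h
  · rw [Finset.sum_eq_single (⟨(j : ℕ) - 1, lt_of_le_of_lt (Nat.sub_le _ _) j.isLt⟩ : Fin n)]
    · rw [if_pos (by simp; omega)]
    · intro b _ hb
      rw [if_neg]
      intro hb'
      exact hb (Fin.ext (show (b : ℕ) = (j : ℕ) - 1 by omega))
    · simp
  · apply Finset.sum_eq_zero
    intro k _
    rw [if_neg (by omega)]

lemma Jmul_apply (A : Matrix (Fin n) (Fin n) ℂ) (i j : Fin n) :
    (Jmat n * A) i j = if h : (i : ℕ) + 1 < n then A ⟨(i : ℕ) + 1, h⟩ j else 0 := by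
  rw [Matrix.mul_apply]
  simp only [Jmat, Matrix.of_apply, ite_mul, one_mul, zero_mul]
  split_ifs with h
  · rw [Finset.sum_eq_single (⟨(i : ℕ) + 1, h⟩ : Fin n)]
    · rw [if_pos (by simp)]
    · intro b _ hb
      rw [if_neg]
      intro hb'
      exact hb (Fin.ext (show (b : ℕ) = (i : ℕ) + 1 by omega))
    · simp
  · apply Finset.sum_eq_zero
    intro k _
    rw [if_neg (by have := k.isLt; omega)]

variable {n : ℕ} {A : Matrix (Fin n) (Fin n) ℂ}

lemma entry_eq (hA : A * Jmat n = Jmat n * A) (i j : Fin n) :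
    (A * Jmat n) i j = (Jmat n * A) i j := by rw [hA]

lemma shift (hA : A * Jmat n = Jmat n * A) {i j : ℕ} (hi : i + 1 < n) (hj : j + 1 < n) :
    A ⟨i + 1, hi⟩ ⟨j + 1, hj⟩ = A ⟨i, by omega⟩ ⟨j, by omega⟩ := by
  have h := entry_eq hA ⟨i, by omega⟩ ⟨j + 1, hj⟩
  rw [mulJ_apply, Jmul_apply, dif_pos (by simp), dif_pos (by simpa using hi)] at h
  rw [← h]
  congr 1

lemma col0 (hA : A * Jmat n = Jmat n * A) {i : ℕ} (hi : i + 1 < n) :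
    A ⟨i + 1, hi⟩ ⟨0, by omega⟩ = 0 := by
  have h := entry_eq hA ⟨i, by omega⟩ ⟨0, by omega⟩
  rw [mulJ_apply, Jmul_apply, dif_neg (by simp), dif_pos (by simpa using hi)] at h
  exact h.symm

lemma lowtri (hA : A * Jmat n = Jmat n * A) :
    ∀ i j : Fin n, (j : ℕ) < (i : ℕ) → A i j = 0 := by
  suffices H : ∀ m : ℕ, ∀ i j : Fin n, (j : ℕ) = m → (j : ℕ) < (i : ℕ) → A i j = 0 by
    intro i j hij; exact H (j : ℕ) i j rfl hij
  intro m
  induction m with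
  | zero =>
    intro i j hj hij
    have hi : ((i : ℕ) - 1) + 1 < n := by have := i.isLt; omega
    have e1 : i = ⟨((i : ℕ) - 1) + 1, hi⟩ := Fin.ext (by simp; omega)
    have e2 : j = ⟨0, by omega⟩ := Fin.ext (by simpa using hj)
    rw [e1, e2]
    exact col0 hA hi
  | succ m ih =>
    intro i j hj hij
    have hi : ((i : ℕ) - 1) + 1 < n := by have := i.isLt; omega
    have hj' : m + 1 < n := by have := j.isLt; omega
    have e1 : i = ⟨((i : ℕ) - 1) + 1, hi⟩ := Fin.ext (by simp; omega)
    have e2 : j = ⟨m + 1, hj'⟩ := Fin.ext (by simpa using hj)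
    rw [e1, e2, shift hA hi hj']
    exact ih ⟨(i : ℕ) - 1, by omega⟩ ⟨m, by omega⟩ rfl (by simp; omega)

lemma diag (hA : A * Jmat n = Jmat n * A) (hn : 0 < n) (i : Fin n) :
    A i i = A ⟨0, hn⟩ ⟨0, hn⟩ := by
  suffices H : ∀ m : ℕ, ∀ i : Fin n, (i : ℕ) = m → A i i = A ⟨0, hn⟩ ⟨0, hn⟩ by
    exact H (i : ℕ) i rfl
  intro m
  induction m with
  | zero =>
    intro i hi
    have : i = ⟨0, hn⟩ := Fin.ext (by simpa using hi)
    rw [this]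
  | succ m ih =>
    intro i hi
    have hm : m + 1 < n := by have := i.isLt; omega
    have e1 : i = ⟨m + 1, hm⟩ := Fin.ext (by simpa using hi)
    rw [e1, shift hA hm hm]
    exact ih ⟨m, by omega⟩ rfl
lemma blockTri (hA : A * Jmat n = Jmat n * A) : A.BlockTriangular id :=
  fun i j h => lowtri hA i j h

lemma det_eq (hA : A * Jmat n = Jmat n * A) (hn : 0 < n) :
    A.det = A ⟨0, hn⟩ ⟨0, hn⟩ ^ n := by
  rw [Matrix.det_of_upperTriangular (blockTri hA)]
  calc ∏ i : Fin n, A (id i) (id i) = ∏ _i : Fin n, A ⟨0, hn⟩ ⟨0, hn⟩ :=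
        Finset.prod_congr rfl (fun i _ => diag hA hn i)
    _ = A ⟨0, hn⟩ ⟨0, hn⟩ ^ n := by
        rw [Finset.prod_const, Finset.card_univ, Fintype.card_fin]

lemma mul00 {B : Matrix (Fin n) (Fin n) ℂ} (hB : B * Jmat n = Jmat n * B) (hn : 0 < n) :
    (A * B) ⟨0, hn⟩ ⟨0, hn⟩ = A ⟨0, hn⟩ ⟨0, hn⟩ * B ⟨0, hn⟩ ⟨0, hn⟩ := by
  rw [Matrix.mul_apply]
  rw [Finset.sum_eq_single (⟨0, hn⟩ : Fin n)]
  · intro b _ hb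
    rw [lowtri hB b ⟨0, hn⟩ (Nat.pos_of_ne_zero (fun h0 => hb (Fin.ext (by simp [h0])))), mul_zero]
  · simp

def entry00 (hn : 0 < n) (g : Zcent n) : ℂ :=
  ((g : Matrix.SpecialLinearGroup (Fin n) ℂ) : Matrix (Fin n) (Fin n) ℂ) ⟨0, hn⟩ ⟨0, hn⟩

lemma comm_of_mem (g : Zcent n) :
    ((g : Matrix.SpecialLinearGroup (Fin n) ℂ) : Matrix (Fin n) (Fin n) ℂ) * Jmat n =
      Jmat n * ((g : Matrix.SpecialLinearGroup (Fin n) ℂ) : Matrix (Fin n) (Fin n) ℂ) := g.2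

lemma pow00 (hn : 0 < n) (g : Zcent n) : entry00 hn g ^ n = 1 := by
  have hd : ((g : Matrix.SpecialLinearGroup (Fin n) ℂ) : Matrix (Fin n) (Fin n) ℂ).det = 1 :=
    (g : Matrix.SpecialLinearGroup (Fin n) ℂ).2
  rw [det_eq (comm_of_mem g) hn] at hd
  exact hd

def unit00 (hn : 0 < n) (g : Zcent n) : ℂˣ where
  val := entry00 hn g
  inv := entry00 hn g ^ (n - 1)
  val_inv := by
    rw [← pow_succ', Nat.sub_add_cancel hn]
    exact pow00 hn g
  inv_val := by
    rw [← pow_succ, Nat.sub_add_cancel hn]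
    exact pow00 hn g

lemma entry00_one (hn : 0 < n) : entry00 hn (1 : Zcent n) = 1 := by
  simp [entry00, Matrix.one_apply_eq]

lemma entry00_mul (hn : 0 < n) (g h : Zcent n) :
    entry00 hn (g * h) = entry00 hn g * entry00 hn h := by
  have : ((((g * h) : Zcent n) : Matrix.SpecialLinearGroup (Fin n) ℂ) :
      Matrix (Fin n) (Fin n) ℂ) =
      ((g : Matrix.SpecialLinearGroup (Fin n) ℂ) : Matrix (Fin n) (Fin n) ℂ) *
      ((h : Matrix.SpecialLinearGroup (Fin n) ℂ) : Matrix (Fin n) (Fin n) ℂ) := rfl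
  unfold entry00
  rw [this, mul00 (comm_of_mem h) hn]

def psi (hn : 0 < n) : Zcent n →* rootsOfUnity n ℂ where
  toFun g := ⟨unit00 hn g, by
    rw [mem_rootsOfUnity]
    exact Units.ext (by
      rw [Units.val_pow_eq_pow_val, Units.val_one]
      exact pow00 hn g)⟩
  map_one' := by
    apply Subtype.ext; apply Units.ext
    exact entry00_one hn
  map_mul' g h := by
    apply Subtype.ext; apply Units.ext
    exact entry00_mul hn g h

lemma continuous_entry00 (hn : 0 < n) : Continuous (entry00 hn) :=
  (continuous_subtype_val.comp (X := Zcent n) continuous_subtype_val).matrix_elem _ _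

lemma psi_val (hn : 0 < n) (g : Zcent n) :
    (((psi hn g : rootsOfUnity n ℂ) : ℂˣ) : ℂ) = entry00 hn g := rfl
lemma mem_component (hn : 0 < n) (g : Zcent n) (hg : entry00 hn g = 1) :
    g ∈ connectedComponent (1 : Zcent n) := by
  set A : Matrix (Fin n) (Fin n) ℂ :=
    ((g : Matrix.SpecialLinearGroup (Fin n) ℂ) : Matrix (Fin n) (Fin n) ℂ) with hAdef
  set N : Matrix (Fin n) (Fin n) ℂ := A - 1 with hNdef
  have hcomm : A * Jmat n = Jmat n * A := comm_of_mem g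
  have hN : N * Jmat n = Jmat n * N := by
    rw [hNdef, sub_mul, mul_sub, one_mul, mul_one, hcomm]
  have hNlow : ∀ i j : Fin n, (j : ℕ) < (i : ℕ) → N i j = 0 := by
    intro i j h
    rw [hNdef, Matrix.sub_apply, lowtri hcomm i j h,
      Matrix.one_apply_ne (fun he => by rw [he] at h; omega), sub_zero]
  have hg' : A ⟨0, hn⟩ ⟨0, hn⟩ = 1 := hg
  have hNdiag : ∀ i : Fin n, N i i = 0 := by
    intro i
    rw [hNdef, Matrix.sub_apply, diag hcomm hn i, hg', Matrix.one_apply_eq, sub_self]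
  have hMdet : ∀ c : ℂ, (1 + c • N).det = 1 := by
    intro c
    have htri : (1 + c • N).BlockTriangular id := by
      intro i j h
      rw [Matrix.add_apply, Matrix.smul_apply, hNlow i j h,
        Matrix.one_apply_ne (fun he => by rw [he] at h; exact lt_irrefl _ h),
        smul_zero, add_zero]
    rw [Matrix.det_of_upperTriangular htri]
    apply Finset.prod_eq_one
    intro i _
    show (1 + c • N) i i = 1
    rw [Matrix.add_apply, Matrix.smul_apply, hNdiag i, smul_zero, add_zero,
      Matrix.one_apply_eq]
  have hMcomm : ∀ c : ℂ, (1 + c • N) * Jmat n = Jmat n * (1 + c • N) := by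
    intro c
    rw [add_mul, mul_add, one_mul, mul_one, Matrix.smul_mul, Matrix.mul_smul, hN]
  let F : ℝ → Zcent n := fun t => ⟨⟨1 + (t : ℂ) • N, hMdet t⟩, hMcomm (t : ℂ)⟩
  have hFc : Continuous F := by
    apply Continuous.subtype_mk
    apply Continuous.subtype_mk
    exact continuous_const.add (Complex.continuous_ofReal.smul continuous_const)
  have hF0 : F 0 = 1 := by
    apply Subtype.ext; apply Subtype.ext
    show 1 + ((0 : ℝ) : ℂ) • N = 1
    rw [Complex.ofReal_zero, zero_smul, add_zero]
  have hF1 : F 1 = g := by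
    apply Subtype.ext; apply Subtype.ext
    show 1 + ((1 : ℝ) : ℂ) • N = A
    rw [Complex.ofReal_one, one_smul, hNdef, add_sub_cancel]
  have hpc : IsPreconnected (Set.range F) := isPreconnected_range hFc
  exact hpc.subset_connectedComponent ⟨0, hF0⟩ ⟨1, hF1⟩

lemma comp_sub (hn : 0 < n) (g : Zcent n) (hg : g ∈ connectedComponent (1 : Zcent n)) :
    entry00 hn g = 1 := by
  set K : Set (Zcent n) := entry00 hn ⁻¹' {1} with hKdef
  have hKc : IsClosed K := IsClosed.preimage (continuous_entry00 hn) isClosed_singleton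
  have hS : ({z : ℂ | z ^ n = 1}).Finite := by
    apply Set.Finite.subset ((Polynomial.nthRoots n (1 : ℂ)).toFinset : Finset ℂ).finite_toSet
    intro z hz
    exact Multiset.mem_toFinset.2 ((Polynomial.mem_nthRoots hn).2 hz)
  have hKo : IsOpen K := by
    rw [← isClosed_compl_iff]
    have hcompl : Kᶜ = entry00 hn ⁻¹' ({z : ℂ | z ^ n = 1} \ {1}) := by
      ext g'
      simp only [hKdef, Set.mem_compl_iff, Set.mem_preimage, Set.mem_singleton_iff,
        Set.mem_diff, Set.mem_setOf_eq]
      exact ⟨fun h => ⟨pow00 hn g', h⟩, fun h => h.2⟩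
    rw [hcompl]
    exact IsClosed.preimage (continuous_entry00 hn)
      ((hS.subset Set.diff_subset).isClosed)
  have h1K : (1 : Zcent n) ∈ K := by
    simp only [hKdef, Set.mem_preimage, Set.mem_singleton_iff]
    exact entry00_one hn
  exact IsClopen.connectedComponent_subset ⟨hKc, hKo⟩ h1K hg

end S8


/-- The component group of the centralizer of a regular nilpotent in `SL_n(ℂ)` is
`ℤ/nℤ`: there is a surjective homomorphism to `ℤ/nℤ` whose kernel is exactly the
connected component of the identity, i.e. the quotient of `Z` by its identity
component is isomorphic to `ℤ/nℤ`. -/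
theorem statement8 (n : ℕ) (hn : 1 ≤ n) :
    ∃ φ : Zcent n →* Multiplicative (ZMod n),
      Function.Surjective φ ∧
        ∀ g : Zcent n, φ g = 1 ↔ g ∈ connectedComponent (1 : Zcent n) := by
  haveI : NeZero n := ⟨by omega⟩
  have hn0 : 0 < n := hn
  have hζ : IsPrimitiveRoot (Complex.exp (2 * Real.pi * Complex.I / n)) n :=
    Complex.isPrimitiveRoot_exp n (NeZero.ne n)
  have hζu : IsPrimitiveRoot ((hζ.isUnit (NeZero.ne n)).unit) n := hζ.isUnit_unit (NeZero.ne n)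
  let e : Multiplicative (ZMod n) ≃* rootsOfUnity n ℂ :=
    (AddEquiv.toMultiplicativeLeft hζu.zmodEquivZPowers).trans
      (MulEquiv.subgroupCongr hζu.zpowers_eq)
  refine ⟨(e.symm.toMonoidHom).comp (S8.psi hn0), ?_, ?_⟩
  · apply Function.Surjective.comp e.symm.surjective
    intro ξ
    have hξ : ((ξ : ℂˣ) : ℂ) ^ n = 1 := by
      have h2 := (mem_rootsOfUnity _ _).1 ξ.2
      calc ((ξ : ℂˣ) : ℂ) ^ n = (((ξ : ℂˣ) ^ n : ℂˣ) : ℂ) := by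
            rw [Units.val_pow_eq_pow_val]
        _ = 1 := by rw [h2, Units.val_one]
    have hdet : ((((ξ : ℂˣ) : ℂ)) • (1 : Matrix (Fin n) (Fin n) ℂ)).det = 1 := by
      rw [Matrix.det_smul, Matrix.det_one, mul_one, Fintype.card_fin, hξ]
    have hcm : ((((ξ : ℂˣ) : ℂ)) • (1 : Matrix (Fin n) (Fin n) ℂ)) * Jmat n =
        Jmat n * ((((ξ : ℂˣ) : ℂ)) • (1 : Matrix (Fin n) (Fin n) ℂ)) := by
      rw [Matrix.smul_mul, Matrix.mul_smul, one_mul, mul_one]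
    refine ⟨⟨⟨(((ξ : ℂˣ) : ℂ)) • (1 : Matrix (Fin n) (Fin n) ℂ), hdet⟩, hcm⟩, ?_⟩
    apply Subtype.ext; apply Units.ext
    rw [S8.psi_val]
    simp [S8.entry00, Matrix.smul_apply, Matrix.one_apply_eq]
  · intro g
    have hiff : (e.symm.toMonoidHom.comp (S8.psi hn0)) g = 1 ↔ S8.entry00 hn0 g = 1 := by
      rw [MonoidHom.comp_apply, MulEquiv.coe_toMonoidHom, MulEquiv.map_eq_one_iff,
        Subtype.ext_iff, Units.ext_iff]
      rw [S8.psi_val]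
      simp only [OneMemClass.coe_one, Units.val_one]
    rw [hiff]
    exact ⟨fun h => S8.mem_component hn0 g h, fun h => S8.comp_sub hn0 g h⟩


end
end

section
/- Fix n ≥ 1. For an n×n complex matrix x and v ∈ ℂⁿ, let s(x,v) := det M(x,v), where M(x,v) is the n×n matrix whose j-th column is x^{j−1}v for j = 1, …, n. If x is strictly upper triangular (x_{ij} = 0 whenever i ≥ j), then s(x,v) = (−1)^{n(n−1)/2} · v_n^n · ∏_{i=1}^{n−1} x_{i,i+1}^{\,i}, where v_n is the last coordinate of v and x_{i,i+1} are the superdiagonal entries of x. In particular, s(x,v) depends only on v_n and the superdiagonal entries of x. -/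
open Finset

private lemma powA {n : ℕ} (x : Matrix (Fin n) (Fin n) ℂ)
    (hx : ∀ i j : Fin n, j ≤ i → x i j = 0) :
    ∀ (k : ℕ) (i j : Fin n), (j : ℕ) < (i : ℕ) + k → (x ^ k) i j = 0 := by
  intro k
  induction k with
  | zero =>
    intro i j h
    simp only [Nat.add_zero] at h
    rw [pow_zero, Matrix.one_apply_ne]
    intro he; subst he; omega
  | succ k ih =>
    intro i j h
    rw [pow_succ, Matrix.mul_apply]
    apply Finset.sum_eq_zero
    intro l _
    by_cases hl : (l : ℕ) < (i : ℕ) + k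
    · rw [ih i l hl, zero_mul]
    · rw [hx l j (by rw [Fin.le_def]; omega), mul_zero]

private lemma powB {n : ℕ} (x : Matrix (Fin n) (Fin n) ℂ)
    (hx : ∀ i j : Fin n, j ≤ i → x i j = 0) (g : ℕ → ℂ)
    (hg : ∀ (s : ℕ) (hs : s + 1 < n), g s = x ⟨s, by omega⟩ ⟨s + 1, hs⟩) :
    ∀ (k : ℕ) (i : Fin n) (h : (i : ℕ) + k < n),
      (x ^ k) i ⟨(i : ℕ) + k, h⟩ = ∏ s ∈ Finset.Ico (i : ℕ) ((i : ℕ) + k), g s := by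
  intro k
  induction k with
  | zero =>
    intro i h
    have e : (⟨(i : ℕ) + 0, h⟩ : Fin n) = i := by ext; simp
    rw [e, pow_zero, Matrix.one_apply_eq]
    simp
  | succ k ih =>
    intro i h
    have hr : (∏ s ∈ Finset.Ico (i : ℕ) ((i : ℕ) + (k + 1)), g s)
        = (∏ s ∈ Finset.Ico (i : ℕ) ((i : ℕ) + k), g s) * g ((i : ℕ) + k) := by
      rw [show (i : ℕ) + (k + 1) = ((i : ℕ) + k) + 1 from by omega,
        Finset.prod_Ico_succ_top (by omega)]
    rw [hr, pow_succ, Matrix.mul_apply]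
    rw [Finset.sum_eq_single_of_mem (⟨(i : ℕ) + k, by omega⟩ : Fin n) (Finset.mem_univ _)]
    · rw [ih i (by omega), hg ((i : ℕ) + k) (by omega)]
      rfl
    · intro l _ hl
      have hl' : (l : ℕ) ≠ (i : ℕ) + k := fun he => hl (by ext; exact he)
      by_cases h2 : (l : ℕ) < (i : ℕ) + k
      · rw [powA x hx k i l h2, zero_mul]
      · rw [hx l ⟨(i : ℕ) + (k + 1), h⟩ (by rw [Fin.le_def]; simp; omega), mul_zero]

private lemma gauss_step (m : ℕ) : (m + 1) * m / 2 = m + m * (m - 1) / 2 := by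
  have key : (m + 1) * m = m * (m - 1) + 2 * m := by
    cases m with
    | zero => simp
    | succ m => simp only [Nat.succ_sub_one]; ring
  have h1 : 2 ∣ m * (m - 1) := by
    cases m with
    | zero => simp
    | succ m => simpa [Nat.succ_sub_one, mul_comm] using (Nat.even_mul_succ_self m).two_dvd
  omega

private lemma det_antidiag : ∀ (m : ℕ) (M : Matrix (Fin m) (Fin m) ℂ),
    (∀ i j : Fin m, m ≤ (i : ℕ) + (j : ℕ) → M i j = 0) →
    M.det = (-1 : ℂ) ^ (m * (m - 1) / 2) *
      ∏ i : Fin m, M i ⟨m - 1 - (i : ℕ), by have := i.isLt; omega⟩ := by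
  intro m
  induction m with
  | zero => intro M h; simp [Matrix.det_fin_zero]
  | succ m ih =>
    intro M h
    rw [Matrix.det_succ_row M (Fin.last m)]
    rw [Finset.sum_eq_single_of_mem (0 : Fin (m + 1)) (Finset.mem_univ _)]
    · have hminor : ∀ i j : Fin m, m ≤ (i : ℕ) + (j : ℕ) →
          (M.submatrix (Fin.last m).succAbove (0 : Fin (m + 1)).succAbove) i j = 0 := by
        intro i j hij
        simp only [Matrix.submatrix_apply, Fin.succAbove_last, Fin.zero_succAbove]
        exact h _ _ (by simp [Fin.val_succ]; omega)
      rw [ih _ hminor]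
      simp only [Matrix.submatrix_apply, Fin.succAbove_last, Fin.zero_succAbove]
      have hprod : ∏ i : Fin (m + 1),
          M i ⟨m + 1 - 1 - (i : ℕ), by have := i.isLt; omega⟩ =
          (∏ i : Fin m, M (Fin.castSucc i)
            ((⟨m - 1 - (i : ℕ), by have := i.isLt; omega⟩ : Fin m).succ)) * M (Fin.last m) 0 := by
        rw [Fin.prod_univ_castSucc]
        congr 1
        · apply Finset.prod_congr rfl
          intro i _
          congr 1
          ext
          have := i.isLt
          simp [Fin.val_succ]
          omega
        · congr 1
          ext
          simp
      rw [hprod]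
      rw [show ((Fin.last m : ℕ) + ((0 : Fin (m + 1)) : ℕ)) = m by simp]
      rw [show ((m + 1) * (m + 1 - 1) / 2) = m + m * (m - 1) / 2 by
        simpa using gauss_step m]
      rw [pow_add]
      ring
    · intro j _ hj
      have hz : M (Fin.last m) j = 0 := by
        apply h
        simp only [Fin.val_last]
        have : (j : ℕ) ≠ 0 := fun he => hj (by ext; simp [he])
        omega
      rw [hz]; ring

private lemma prodprod (g : ℕ → ℂ) : ∀ m : ℕ,
    ∏ i ∈ Finset.range (m + 1), ∏ s ∈ Finset.Ico i m, g s
      = ∏ s ∈ Finset.range m, g s ^ (s + 1) := by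
  intro m
  induction m with
  | zero => simp
  | succ m ih =>
    rw [Finset.prod_range_succ (fun i => ∏ s ∈ Finset.Ico i (m + 1), g s) (m + 1)]
    simp only [Finset.Ico_self, Finset.prod_empty, mul_one]
    have hstep : ∀ i ∈ Finset.range (m + 1),
        ∏ s ∈ Finset.Ico i (m + 1), g s = (∏ s ∈ Finset.Ico i m, g s) * g m := by
      intro i hi
      exact Finset.prod_Ico_succ_top (by simp at hi; omega) g
    rw [Finset.prod_congr rfl hstep, Finset.prod_mul_distrib, ih, Finset.prod_const,
      Finset.card_range, Finset.prod_range_succ]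

/-- `s(x,v)`: the determinant of the matrix whose `j`-th column is `x^{j-1} v`. -/
noncomputable def sFun (n : ℕ) (x : Matrix (Fin n) (Fin n) ℂ) (v : Fin n → ℂ) : ℂ :=
  Matrix.det (Matrix.of fun i j : Fin n => (x ^ (j : ℕ)).mulVec v i)

/-- For a strictly upper triangular `x`,
`s(x,v) = (-1)^{n(n-1)/2} vₙⁿ ∏_{i=1}^{n-1} x_{i,i+1}ⁱ`. -/
theorem statement10 (n : ℕ) (hn : 1 ≤ n) (x : Matrix (Fin n) (Fin n) ℂ)
    (v : Fin n → ℂ) (hx : ∀ i j : Fin n, j ≤ i → x i j = 0) :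
    sFun n x v =
      (-1 : ℂ) ^ (n * (n - 1) / 2) * v ⟨n - 1, by omega⟩ ^ n *
        ∏ i : Fin (n - 1),
          x ⟨(i : ℕ), by have := i.isLt; omega⟩ ⟨(i : ℕ) + 1, by have := i.isLt; omega⟩ ^
            ((i : ℕ) + 1) := by
  set g : ℕ → ℂ := fun s => if hs : s + 1 < n then x ⟨s, by omega⟩ ⟨s + 1, hs⟩ else 0 with hgdef
  have hg : ∀ (s : ℕ) (hs : s + 1 < n), g s = x ⟨s, by omega⟩ ⟨s + 1, hs⟩ := by
    intro s hs
    simp only [hgdef]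
    rw [dif_pos hs]
  have h0 : ∀ i j : Fin n, n ≤ (i : ℕ) + (j : ℕ) →
      (Matrix.of fun i j : Fin n => (x ^ (j : ℕ)).mulVec v i) i j = 0 := by
    intro i j hij
    simp only [Matrix.of_apply, Matrix.mulVec, dotProduct]
    apply Finset.sum_eq_zero
    intro l _
    rw [powA x hx _ i l (by have := l.isLt; omega), zero_mul]
  rw [sFun, det_antidiag n _ h0]
  have hent : ∀ i : Fin n,
      (Matrix.of fun i j : Fin n => (x ^ (j : ℕ)).mulVec v i) i
        ⟨n - 1 - (i : ℕ), by have := i.isLt; omega⟩ =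
      (∏ s ∈ Finset.Ico (i : ℕ) (n - 1), g s) * v ⟨n - 1, by omega⟩ := by
    intro i
    have hi := i.isLt
    simp only [Matrix.of_apply, Matrix.mulVec, dotProduct]
    rw [Finset.sum_eq_single_of_mem (⟨n - 1, by omega⟩ : Fin n) (Finset.mem_univ _)]
    · congr 1
      have e : (⟨n - 1, by omega⟩ : Fin n) = ⟨(i : ℕ) + (n - 1 - (i : ℕ)), by omega⟩ := by
        ext; simp; omega
      rw [e, powB x hx g hg (n - 1 - (i : ℕ)) i (by omega),
        show (i : ℕ) + (n - 1 - (i : ℕ)) = n - 1 from by omega]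
    · intro l _ hl
      have hll := l.isLt
      have hl2 : (l : ℕ) ≠ n - 1 := fun he => hl (by ext; simp [he])
      rw [powA x hx _ i l (by omega), zero_mul]
  rw [Finset.prod_congr rfl (fun i _ => hent i), Finset.prod_mul_distrib, Finset.prod_const,
    Finset.card_univ, Fintype.card_fin]
  have hrhs : ∀ i : Fin (n - 1),
      x ⟨(i : ℕ), by have := i.isLt; omega⟩ ⟨(i : ℕ) + 1, by have := i.isLt; omega⟩ ^
          ((i : ℕ) + 1) = g (i : ℕ) ^ ((i : ℕ) + 1) := by
    intro i
    have hi := i.isLt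
    rw [hg (i : ℕ) (by omega)]
  rw [Finset.prod_congr rfl (fun i _ => hrhs i),
    Fin.prod_univ_eq_prod_range (fun s => g s ^ (s + 1)) (n - 1)]
  obtain ⟨m, rfl⟩ : ∃ m, n = m + 1 := ⟨n - 1, by omega⟩
  simp only [Nat.add_sub_cancel]
  rw [Fin.prod_univ_eq_prod_range (fun i => ∏ s ∈ Finset.Ico i m, g s) (m + 1)]
  rw [prodprod g m]
  ring
end
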